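/- A topological space X is e*-θ-T_{1/2} (every quasi e*-θ-closed set is e*-θ-closed) if and only if X is e*θ-T_1 (for any distinct points x, y there exist e*-θ-open sets U ∋ x with y ∉ U and V ∋ y with x ∉ V). -/
import Mathlib


open Set Topology

variable {X : Type*} [TopologicalSpace X]

/-- δ-closure of A. -/
def deltaCl (A : Set X) : Set X :=
  {x | ∀ U : Set X, IsOpen U → x ∈ U → (interior (closure U) ∩ A).Nonempty}

/-- A is e*-open if A ⊆ cl(int(δ-cl A)). -/
def EStarOpen (A : Set X) : Prop := A ⊆ closure (interior (deltaCl A))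

/-- A is e*-closed if its complement is e*-open. -/
def EStarClosed (A : Set X) : Prop := EStarOpen Aᶜ

/-- e*-closure: intersection of all e*-closed supersets. -/
def eStarCl (A : Set X) : Set X := ⋂₀ {F | EStarClosed F ∧ A ⊆ F}

/-- e*-interior: union of all e*-open subsets. -/
def eStarInt (A : Set X) : Set X := ⋃₀ {U | EStarOpen U ∧ U ⊆ A}

/-- e*-regular: both e*-open and e*-closed. -/
def EStarRegular (A : Set X) : Prop := EStarOpen A ∧ EStarClosed A

/-- e*-θ-closure. -/
def eStarClTheta (A : Set X) : Set X :=
  {x | ∀ U : Set X, EStarOpen U → x ∈ U → (eStarCl U ∩ A).Nonempty}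

/-- e*-θ-closed. -/
def EStarThetaClosed (A : Set X) : Prop := A = eStarClTheta A

/-- e*-θ-open. -/
def EStarThetaOpen (A : Set X) : Prop := EStarThetaClosed Aᶜ

/-- quasi e*-θ-closed. -/
def QEStarThetaClosed (A : Set X) : Prop :=
  ∀ U : Set X, EStarThetaOpen U → A ⊆ U → eStarClTheta A ⊆ U

/-- e*-θ-kernel. -/
def eStarKerTheta (A : Set X) : Set X := ⋂₀ {U | EStarThetaOpen U ∧ A ⊆ U}

lemma subset_eStarCl (A : Set X) : A ⊆ eStarCl A := fun x hx F hF => hF.2 hx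

lemma eStarCl_subset_of_closed {A : Set X} (h : EStarClosed A) : eStarCl A ⊆ A :=
  fun _ hx => hx A ⟨h, subset_rfl⟩

lemma subset_eStarClTheta (A : Set X) : A ⊆ eStarClTheta A :=
  fun x hx U _ hxU => ⟨x, subset_eStarCl U hxU, hx⟩

lemma deltaCl_mono {A B : Set X} (h : A ⊆ B) : deltaCl A ⊆ deltaCl B := by
  intro x hx U hU hxU
  obtain ⟨z, hz1, hz2⟩ := hx U hU hxU
  exact ⟨z, hz1, h hz2⟩

lemma eStarOpen_sUnion {S : Set (Set X)} (h : ∀ A ∈ S, EStarOpen A) :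
    EStarOpen (⋃₀ S) := by
  intro x hx
  obtain ⟨A, hAS, hxA⟩ := hx
  have := h A hAS hxA
  exact closure_mono (interior_mono (deltaCl_mono (subset_sUnion_of_mem hAS))) this

lemma eStarClosed_eStarCl (A : Set X) : EStarClosed (eStarCl A) := by
  unfold EStarClosed
  have : (eStarCl A)ᶜ = ⋃₀ (compl '' {F | EStarClosed F ∧ A ⊆ F}) := by
    rw [sUnion_image]
    simp [eStarCl, sInter_eq_biInter, compl_iInter]
  rw [this]
  apply eStarOpen_sUnion
  rintro B ⟨F, ⟨hF, _⟩, rfl⟩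
  exact hF

/-- If a singleton is e*-θ-open then it is e*-θ-closed. -/
lemma singleton_thetaClosed_of_thetaOpen {x : X} (h : EStarThetaOpen {x}) :
    EStarThetaClosed ({x} : Set X) := by
  have hx : x ∉ eStarClTheta ({x}ᶜ : Set X) := by
    rw [← h]; simp
  simp only [eStarClTheta, mem_setOf_eq, not_forall] at hx
  obtain ⟨U, hUopen, hxU, hU⟩ := hx
  have hUcl : eStarCl U ⊆ {x} := by
    intro z hz
    by_contra hzx
    exact hU ⟨z, hz, hzx⟩
  have hcl_eq : eStarCl ({x} : Set X) = {x} := by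
    apply subset_antisymm _ (subset_eStarCl _)
    have hxsub : ({x} : Set X) ⊆ U := by
      intro z hz; rw [mem_singleton_iff] at hz; subst hz; exact hxU
    calc eStarCl ({x} : Set X) ⊆ eStarCl U := by
          intro z hz F hF; exact hz F ⟨hF.1, hxsub.trans hF.2⟩
      _ ⊆ {x} := hUcl
  have hxclosed : EStarClosed ({x} : Set X) := hcl_eq ▸ eStarClosed_eStarCl {x}
  -- {x}ᶜ is e*-open (that's hxclosed) and e*-closed
  have hccl : EStarClosed ({x}ᶜ : Set X) := by
    have hxopen : EStarOpen ({x} : Set X) := by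
      have : U = {x} := subset_antisymm ((subset_eStarCl U).trans hUcl)
        (by intro z hz; rw [mem_singleton_iff] at hz; subst hz; exact hxU)
      exact this ▸ hUopen
    unfold EStarClosed; rwa [compl_compl]
  apply subset_antisymm (subset_eStarClTheta _)
  intro y hy
  by_contra hyx
  obtain ⟨z, hz1, hz2⟩ := hy ({x}ᶜ) hxclosed hyx
  rw [mem_singleton_iff] at hz2; subst hz2
  exact (eStarCl_subset_of_closed hccl hz1) rfl

theorem stmt16 :
    (∀ A : Set X, QEStarThetaClosed A → EStarThetaClosed A) ↔
    (∀ x y : X, x ≠ y →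
      (∃ U : Set X, EStarThetaOpen U ∧ x ∈ U ∧ y ∉ U) ∧
      (∃ V : Set X, EStarThetaOpen V ∧ y ∈ V ∧ x ∉ V)) := by
  constructor
  · intro h x y hxy
    -- every singleton is e*-θ-closed
    have key : ∀ z : X, EStarThetaClosed ({z} : Set X) := by
      intro z
      by_cases hc : EStarThetaOpen ({z}ᶜ : Set X)
      · unfold EStarThetaOpen at hc; rwa [compl_compl] at hc
      · -- {z}ᶜ is quasi e*-θ-closed
        have hq : QEStarThetaClosed ({z}ᶜ : Set X) := by
          intro U hU hsub
          rcases eq_or_ne U ({z}ᶜ) with h1 | h1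
          · exact absurd (h1 ▸ hU) hc
          · have hUuniv : U = univ := by
              apply subset_antisymm (subset_univ U)
              intro w _
              by_cases hw : w = z
              · by_contra hwU
                -- U ⊇ {z}ᶜ and z ∉ U gives U = {z}ᶜ
                exact h1 (subset_antisymm (fun v hv => by
                  by_contra hvz
                  rw [notMem_compl_iff, mem_singleton_iff] at hvz
                  exact hwU (hw ▸ hvz ▸ hv)) hsub)
              · exact hsub hw
            rw [hUuniv]; exact subset_univ _
        have := h ({z}ᶜ) hq
        exact singleton_thetaClosed_of_thetaOpen this
    have hUopen : ∀ z : X, EStarThetaOpen ({z}ᶜ : Set X) := by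
      intro z; unfold EStarThetaOpen; rw [compl_compl]; exact key z
    exact ⟨⟨{y}ᶜ, hUopen y, hxy, by simp⟩, ⟨{x}ᶜ, hUopen x, Ne.symm hxy, by simp⟩⟩
  · intro h A hA
    -- singletons are θ-closed under T1
    have key : ∀ z : X, EStarThetaClosed ({z} : Set X) := by
      intro z
      apply subset_antisymm (subset_eStarClTheta _)
      intro y hy
      by_contra hyz
      rw [mem_singleton_iff] at hyz
      obtain ⟨V, hV, hyV, hzV⟩ := (h y z hyz).1
      have hyVc : y ∉ eStarClTheta (Vᶜ) := by rw [← hV]; simpa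
      simp only [eStarClTheta, mem_setOf_eq, not_forall] at hyVc
      obtain ⟨U, hUopen, hyU, hU⟩ := hyVc
      obtain ⟨w, hw1, hw2⟩ := hy U hUopen hyU
      rw [mem_singleton_iff] at hw2; subst hw2
      exact hU ⟨w, hw1, hzV⟩
    apply subset_antisymm (subset_eStarClTheta _)
    intro z hz
    by_contra hzA
    have hopen : EStarThetaOpen ({z}ᶜ : Set X) := by
      unfold EStarThetaOpen; rw [compl_compl]; exact key z
    exact (hA ({z}ᶜ) hopen (fun w hw => fun hwz => hzA (mem_singleton_iff.mp hwz ▸ hw)) hz) rfl
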